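/- Let M = [m_{ij}] be an n×n complex Nekrasov matrix whose diagonal entries m_{ii} are real and positive, let D = diag(d_1,…,d_n) with 0 ≤ d_i ≤ 1 for all i, and set M̃ = I − D + DM = [m̃_{ij}]. Then for every i = 1,…,n one has z_i(M̃)/m̃_{ii} ≤ η_i(M)/min{m_{ii}, 1}. -/

import Mathlib

open Finset

noncomputable def nekH {n : ℕ} {𝕜 : Type*} [RCLike 𝕜] (A : Matrix (Fin n) (Fin n) 𝕜) : Fin n → ℝ
  | i =>
    (∑ j : Fin n, if h : j < i then ‖A i j‖ / ‖A j j‖ * nekH A j else 0)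
      + ∑ j : Fin n, if i < j then ‖A i j‖ else 0
termination_by i => i.val
decreasing_by exact h

def IsNekrasov {n : ℕ} {𝕜 : Type*} [RCLike 𝕜] (A : Matrix (Fin n) (Fin n) 𝕜) : Prop :=
  ∀ i, nekH A i < ‖A i i‖

noncomputable def nekZ {n : ℕ} {𝕜 : Type*} [RCLike 𝕜] (A : Matrix (Fin n) (Fin n) 𝕜) : Fin n → ℝ
  | i => (∑ j : Fin n, if h : j < i then ‖A i j‖ / ‖A j j‖ * nekZ A j else 0) + 1
termination_by i => i.val
decreasing_by exact h

noncomputable def nekEta {n : ℕ} {𝕜 : Type*} [RCLike 𝕜] (M : Matrix (Fin n) (Fin n) 𝕜) : Fin n → ℝ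
  | i => (∑ j : Fin n, if h : j < i then ‖M i j‖ / min ‖M j j‖ 1 * nekEta M j else 0) + 1
termination_by i => i.val
decreasing_by exact h

noncomputable def linftyNorm {n : ℕ} {𝕜 : Type*} [RCLike 𝕜] (A : Matrix (Fin n) (Fin n) 𝕜) : ℝ :=
  ⨆ i, ∑ j, ‖A i j‖

noncomputable def rPlus {n : ℕ} (M : Matrix (Fin n) (Fin n) ℝ) (i : Fin n) : ℝ :=
  Finset.fold max 0 (fun j => M i j) (Finset.univ.erase i)

noncomputable def BPlus {n : ℕ} (M : Matrix (Fin n) (Fin n) ℝ) : Matrix (Fin n) (Fin n) ℝ :=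
  Matrix.of fun i j => M i j - rPlus M i

def IsBNekrasov {n : ℕ} (M : Matrix (Fin n) (Fin n) ℝ) : Prop :=
  IsNekrasov (BPlus M) ∧ ∀ i, 0 < BPlus M i i

def IsLCPSolution {n : ℕ} (M : Matrix (Fin n) (Fin n) ℝ) (q x : Fin n → ℝ) : Prop :=
  (∀ i, 0 ≤ x i) ∧ (∀ i, 0 ≤ (M.mulVec x + q) i) ∧ ∑ i, (M.mulVec x + q) i * x i = 0


lemma nekEta_ge_one {n : ℕ} (M : Matrix (Fin n) (Fin n) ℂ) : ∀ i, 1 ≤ nekEta M i := by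
  suffices h : ∀ k : ℕ, ∀ i : Fin n, i.val < k → 1 ≤ nekEta M i by
    intro i; exact h (i.val + 1) i (Nat.lt_succ_self _)
  intro k
  induction k with
  | zero => intro i hi; omega
  | succ k ih =>
    intro i hi
    rw [nekEta]
    have h0 : 0 ≤ ∑ j : Fin n,
        if _ : j < i then ‖M i j‖ / min ‖M j j‖ 1 * nekEta M j else 0 := by
      apply Finset.sum_nonneg
      intro j _
      split
      · next h =>
          exact mul_nonneg (div_nonneg (norm_nonneg _)
            (le_min (norm_nonneg _) zero_le_one))
            (le_trans zero_le_one (ih j (by omega)))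
      · exact le_refl 0
    linarith

def IsPMatrix {n : ℕ} (M : Matrix (Fin n) (Fin n) ℝ) : Prop :=
  ∀ S : Finset (Fin n), 0 < (M.submatrix (fun i : S => (i : Fin n)) (fun j : S => (j : Fin n))).det


theorem stmt5 {n : ℕ} (M : Matrix (Fin n) (Fin n) ℂ)
    (hdiag : ∀ i, (M i i).im = 0 ∧ 0 < (M i i).re)
    (hNek : IsNekrasov M)
    (d : Fin n → ℝ) (hd : ∀ i, 0 ≤ d i ∧ d i ≤ 1) (i : Fin n) :
    nekZ (1 - Matrix.diagonal (fun k => (d k : ℂ)) + Matrix.diagonal (fun k => (d k : ℂ)) * M) i / ((1 - Matrix.diagonal (fun k => (d k : ℂ)) + Matrix.diagonal (fun k => (d k : ℂ)) * M) i i).re ≤ nekEta M i / min ((M i i).re) 1 :=  by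
  set Dc : Matrix (Fin n) (Fin n) ℂ := Matrix.diagonal (fun k => (d k : ℂ)) with hDc
  set Mt : Matrix (Fin n) (Fin n) ℂ := 1 - Dc + Dc * M with hMtdef
  have hentry : ∀ a b : Fin n, Mt a b = (if a = b then (1 : ℂ) - d a else 0) + d a * M a b := by
    intro a b
    simp [hMtdef, hDc, Matrix.add_apply, Matrix.sub_apply, Matrix.one_apply,
      Matrix.diagonal_mul, Matrix.diagonal_apply]
    split <;> ring
  have hre : ∀ j : Fin n, (Mt j j).re = 1 - d j + d j * (M j j).re := by
    intro j
    rw [hentry j j]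
    simp [Complex.add_re, Complex.sub_re, Complex.mul_re, (hdiag j).1]
  have him : ∀ j : Fin n, (Mt j j).im = 0 := by
    intro j
    rw [hentry j j]
    simp [Complex.add_im, Complex.sub_im, Complex.mul_im, (hdiag j).1]
  have hcpos : ∀ j : Fin n, 0 < min (M j j).re 1 := fun j => lt_min (hdiag j).2 one_pos
  have hpos : ∀ j : Fin n, 0 < (Mt j j).re := by
    intro j
    rw [hre j]
    have h1 := (hd j).1
    have h2 := (hd j).2
    have h3 := (hdiag j).2
    have hc := hcpos j
    have hm1 : min (M j j).re 1 ≤ (M j j).re := min_le_left _ _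
    have hm2 : min (M j j).re 1 ≤ 1 := min_le_right _ _
    nlinarith [mul_nonneg (sub_nonneg.2 h2) (sub_nonneg.2 hm2),
      mul_nonneg h1 (sub_nonneg.2 hm1)]
  have hnorm_re : ∀ z : ℂ, z.im = 0 → 0 < z.re → ‖z‖ = z.re := by
    intro z h1 h2
    have hz : z = ((z.re : ℝ) : ℂ) := Complex.ext rfl h1
    calc ‖z‖ = ‖((z.re : ℝ) : ℂ)‖ := by rw [← hz]
    _ = z.re := by rw [Complex.norm_real, Real.norm_eq_abs, abs_of_pos h2]
  have hnormMt : ∀ j : Fin n, ‖Mt j j‖ = (Mt j j).re :=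
    fun j => hnorm_re _ (him j) (hpos j)
  have hnormM : ∀ j : Fin n, ‖M j j‖ = (M j j).re :=
    fun j => hnorm_re _ (hdiag j).1 (hdiag j).2
  have hoff : ∀ a b : Fin n, a ≠ b → ‖Mt a b‖ = d a * ‖M a b‖ := by
    intro a b hab
    rw [hentry a b, if_neg hab]
    rw [zero_add, norm_mul, Complex.norm_real, Real.norm_eq_abs, abs_of_nonneg (hd a).1]
  have key : ∀ k : ℕ, ∀ i : Fin n,
      i.val < k → nekZ Mt i / (Mt i i).re ≤ nekEta M i / min (M i i).re 1 := by
    intro k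
    induction k with
    | zero => intro i hi; omega
    | succ k ih =>
      intro i hi
      have hc := hcpos i
      rw [div_le_div_iff₀ (hpos i) hc]
      have heta1 := nekEta_ge_one M i
      have hb : nekZ Mt i ≤ d i * (nekEta M i - 1) + 1 := by
        rw [nekZ]
        have hterm : ∀ j : Fin n,
            (if _ : j < i then ‖Mt i j‖ / ‖Mt j j‖ * nekZ Mt j else 0)
            ≤ d i * (if _ : j < i then ‖M i j‖ / min ‖M j j‖ 1 * nekEta M j else 0) := by
          intro j
          by_cases h : j < i
          · rw [dif_pos h, dif_pos h]
            have hne : i ≠ j := (ne_of_lt h).symm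
            have hihj := ih j (by omega)
            have hzb : nekZ Mt j ≤ nekEta M j / min (M j j).re 1 * (Mt j j).re :=
              (div_le_iff₀ (hpos j)).mp hihj
            have ha : 0 ≤ d i * ‖M i j‖ / (Mt j j).re :=
              div_nonneg (mul_nonneg (hd i).1 (norm_nonneg _)) (hpos j).le
            have hne1 : (Mt j j).re ≠ 0 := (hpos j).ne'
            have hne2 : min (M j j).re 1 ≠ 0 := (hcpos j).ne'
            rw [hoff i j hne, hnormMt j, hnormM j]
            calc d i * ‖M i j‖ / (Mt j j).re * nekZ Mt j
                ≤ d i * ‖M i j‖ / (Mt j j).re *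
                    (nekEta M j / min (M j j).re 1 * (Mt j j).re) :=
                  mul_le_mul_of_nonneg_left hzb ha
              _ = d i * (‖M i j‖ / min (M j j).re 1 * nekEta M j) := by
                  field_simp
          · rw [dif_neg h, dif_neg h, mul_zero]
        calc (∑ j : Fin n, if _ : j < i then ‖Mt i j‖ / ‖Mt j j‖ * nekZ Mt j else 0) + 1
            ≤ (∑ j : Fin n, d i *
                (if _ : j < i then ‖M i j‖ / min ‖M j j‖ 1 * nekEta M j else 0)) + 1 := by
              exact add_le_add_left (Finset.sum_le_sum fun j _ => hterm j) 1
          _ = d i * (nekEta M i - 1) + 1 := by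
              rw [← Finset.mul_sum, nekEta]
              ring
      have hm1 : min (M i i).re 1 ≤ (M i i).re := min_le_left _ _
      have hm2 : min (M i i).re 1 ≤ 1 := min_le_right _ _
      have h1 := (hd i).1
      have h2 := (hd i).2
      have := hre i
      nlinarith [mul_nonneg (sub_nonneg.2 h2) (sub_nonneg.2 (le_trans hm2 heta1)),
        mul_nonneg (mul_nonneg h1 (le_trans zero_le_one heta1))
          (sub_nonneg.2 hm1),
        mul_le_mul_of_nonneg_right hb hc.le]
  exact key (i.val + 1) i (Nat.lt_succ_self _)
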